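/- Let H be a submonoid of ℕ^k with H ≠ {0}, and let X be a nonempty subset of {1,…,k}. Then X is independent over H if and only if X is independent over β(H). -/

import Mathlib

def coordFn {k : ℕ} (A : Set (Fin k → ℕ)) (i : Fin k) : A → ℚ :=
  fun f => ((f : Fin k → ℕ) i : ℚ)

def IndepOver {k : ℕ} (X : Finset (Fin k)) (A : Set (Fin k → ℕ)) : Prop :=
  LinearIndependent ℚ (fun i : X => coordFn A i.1)

def MaxIndepOver {k : ℕ} (X : Finset (Fin k)) (A : Set (Fin k → ℕ)) : Prop :=
  IndepOver X A ∧ ∀ Y : Finset (Fin k), X ⊂ Y → ¬ IndepOver Y A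

open Pointwise in
def beta {k : ℕ} (H : AddSubmonoid (Fin k → ℕ)) : Set (Fin k → ℕ) :=
  ((H : Set (Fin k → ℕ)) \ {0}) \
    (((H : Set (Fin k → ℕ)) \ {0}) + ((H : Set (Fin k → ℕ)) \ {0}))

def restrictHom {k : ℕ} (X : Finset (Fin k)) : (Fin k → ℕ) →+ (Fin X.card → ℕ) where
  toFun h := fun j => h (X.orderIsoOfFin rfl j).1
  map_zero' := rfl
  map_add' _ _ := rfl

def IsoToSub {k : ℕ} (H : AddSubmonoid (Fin k → ℕ)) (r : ℕ) : Prop :=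
  ∃ K : AddSubmonoid (Fin r → ℕ), Nonempty (H ≃+ K)

noncomputable def indOf {k : ℕ} (H : AddSubmonoid (Fin k → ℕ)) : ℕ :=
  sInf {r : ℕ | 1 ≤ r ∧ IsoToSub H r}


open Pointwise in
lemma beta_closure {k : ℕ} (H : AddSubmonoid (Fin k → ℕ)) :
    ∀ n : ℕ, ∀ f ∈ H, (∑ j, f j) = n → f ∈ AddSubmonoid.closure (beta H) := by
  intro n
  induction n using Nat.strong_induction_on with
  | _ n ih =>
    intro f hf hfn
    by_cases h0 : f = 0
    · subst h0; exact zero_mem _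
    by_cases hb : f ∈ beta H
    · exact AddSubmonoid.subset_closure hb
    · have hf' : f ∈ (H : Set (Fin k → ℕ)) \ {0} := ⟨hf, h0⟩
      have hmem : f ∈ ((H : Set (Fin k → ℕ)) \ {0}) + ((H : Set (Fin k → ℕ)) \ {0}) := by
        by_contra hc
        exact hb ⟨hf', hc⟩
      obtain ⟨g, hg, g', hg', rfl⟩ := hmem
      have hpos : ∀ h : Fin k → ℕ, h ≠ 0 → 0 < ∑ j, h j := by
        intro h hh
        rcases Nat.eq_zero_or_pos (∑ j, h j) with h0' | h0'
        · exfalso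
          apply hh
          funext j
          exact (Finset.sum_eq_zero_iff.mp h0') j (Finset.mem_univ j)
        · exact h0'
      have hsum : (∑ j, g j) + (∑ j, g' j) = n := by
        rw [← hfn]; rw [← Finset.sum_add_distrib]; rfl
      have hg1 := hpos g hg.2
      have hg2 := hpos g' hg'.2
      have l1 : (∑ j, g j) < n := by omega
      have l2 : (∑ j, g' j) < n := by omega
      exact add_mem (ih _ l1 g hg.1 rfl) (ih _ l2 g' hg'.1 rfl)

theorem statement3 {k : ℕ} (hk : 0 < k) (H : AddSubmonoid (Fin k → ℕ)) (hH : H ≠ ⊥)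
    (X : Finset (Fin k)) (hX : X.Nonempty) :
    IndepOver X (H : Set (Fin k → ℕ)) ↔ IndepOver X (beta H) := by
  have key : ∀ c : X → ℚ,
      (∀ f ∈ beta H, ∑ i : X, c i * (f i.1 : ℚ) = 0) →
      ∀ f ∈ AddSubmonoid.closure (beta H), ∑ i : X, c i * (f i.1 : ℚ) = 0 := by
    intro c hc f hf
    induction hf using AddSubmonoid.closure_induction with
    | mem g hg => exact hc g hg
    | zero => simp
    | add g g' _ _ hgl hg'l =>
      have : ∀ i : X, ((g + g') i.1 : ℚ) = (g i.1 : ℚ) + (g' i.1 : ℚ) := by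
        intro i; simp [Pi.add_apply]
      simp only [this, mul_add, Finset.sum_add_distrib, hgl, hg'l, add_zero]
  unfold IndepOver coordFn
  rw [Fintype.linearIndependent_iff, Fintype.linearIndependent_iff]
  constructor
  · intro hind c hc
    apply hind c
    funext a
    have hc' : ∀ f ∈ beta H, ∑ i : X, c i * (f i.1 : ℚ) = 0 := by
      intro f hf
      have := congrFun hc (⟨f, hf⟩ : beta H)
      simpa [Finset.sum_apply] using this
    have := key c hc' a.1 (beta_closure H _ a.1 a.2 rfl)
    simpa [Finset.sum_apply] using this
  · intro hind c hc
    apply hind c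
    funext a
    have hc' : ∀ f ∈ H, ∑ i : X, c i * (f i.1 : ℚ) = 0 := by
      intro f hf
      have := congrFun hc (⟨f, hf⟩ : (H : Set (Fin k → ℕ)))
      simpa [Finset.sum_apply] using this
    have := hc' a.1 a.2.1.1
    simpa [Finset.sum_apply] using this
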